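/- Let E = [a,b] \subset (0, 2\pi) be an interval and \rho_E = 2\chi_E - 1 on the circle. Then the conjugate function satisfies exp((\pi/2) \tilde{\rho}_E(t)) = |sin((t-a)/2)| / |sin((t-b)/2)| for almost every t, and consequently exp((\pi/2) \tilde{\rho}_E) is not integrable on any neighborhood of b. -/

import Mathlib

open Real Set MeasureTheory Filter

/-- `g` is the conjugate function of `f` (on the circle, parametrized by `[0, 2π]`):
for a.e. `θ`, the truncated conjugate integrals converge to `g θ`. -/
def IsConjugateFn (f g : ℝ → ℝ) : Prop :=
  ∀ᵐ θ ∂(volume.restrict (Set.Ioc 0 (2 * π))),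
    Filter.Tendsto
      (fun ε : ℝ => (1 / (2 * π)) *
        ∫ φ in Set.Ioc 0 (2 * π),
          if ε < |θ - φ| then Real.cos ((θ - φ) / 2) / Real.sin ((θ - φ) / 2) * f φ else 0)
      (nhdsWithin 0 (Set.Ioi 0)) (nhds (g θ))


noncomputable def Fc (θ φ : ℝ) : ℝ := -2 * Real.log (Real.sin ((θ - φ) / 2))

lemma sin_half_ne_zero {x : ℝ} (h0 : x ≠ 0) (h2 : |x| < 2 * π) : Real.sin (x / 2) ≠ 0 := by
  have hπ := Real.pi_pos
  rcases lt_or_gt_of_ne h0 with h | h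
  · have hx : |x| = -x := abs_of_neg h
    have h1 : 0 < -x / 2 := by linarith
    have h2' : -x / 2 < π := by rw [hx] at h2; linarith
    have := Real.sin_pos_of_pos_of_lt_pi h1 h2'
    rw [show -x / 2 = -(x/2) by ring, Real.sin_neg] at this
    intro hc; rw [hc] at this; simp at this
  · have hx : |x| = x := abs_of_pos h
    have h1 : 0 < x / 2 := by linarith
    have h2' : x / 2 < π := by rw [hx] at h2; linarith
    exact ne_of_gt (Real.sin_pos_of_pos_of_lt_pi h1 h2')

lemma ftc_cot (θ u v : ℝ) (huv : u ≤ v)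
    (hne : ∀ φ ∈ Icc u v, Real.sin ((θ - φ) / 2) ≠ 0) :
    ∫ φ in u..v, Real.cos ((θ - φ) / 2) / Real.sin ((θ - φ) / 2) = Fc θ v - Fc θ u := by
  have hIcc : Set.uIcc u v = Icc u v := uIcc_of_le huv
  have hcont : ContinuousOn (fun φ => Real.cos ((θ - φ) / 2) / Real.sin ((θ - φ) / 2)) (Icc u v) := by
    apply ContinuousOn.div
    · exact (Real.continuous_cos.comp (by continuity)).continuousOn
    · exact (Real.continuous_sin.comp (by continuity)).continuousOn
    · exact hne
  apply intervalIntegral.integral_eq_sub_of_hasDerivAt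
  · intro φ hφ
    rw [hIcc] at hφ
    have hs := hne φ hφ
    have h1 : HasDerivAt (fun φ : ℝ => (θ - φ) / 2) (-1 / 2) φ := by
      simpa using (((hasDerivAt_id φ).const_sub θ).div_const 2)
    have h2 : HasDerivAt (fun φ : ℝ => Real.sin ((θ - φ) / 2))
        (Real.cos ((θ - φ) / 2) * (-1 / 2)) φ := (Real.hasDerivAt_sin _).comp φ h1
    have h3 := (Real.hasDerivAt_log hs).comp φ h2
    have h4 := h3.const_mul (-2 : ℝ)
    show HasDerivAt (fun φ : ℝ => -2 * Real.log (Real.sin ((θ - φ) / 2))) _ φ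
    exact h4.congr_deriv (by ring)
  · apply ContinuousOn.intervalIntegrable
    rwa [hIcc]

lemma piece (a b θ u v : ℝ) (huv : u ≤ v) (κ : ℝ)
    (hne : ∀ φ ∈ Icc u v, Real.sin ((θ - φ) / 2) ≠ 0)
    (hκ : ∀ φ ∈ Ioo u v, (if φ ∈ Icc a b then (1:ℝ) else -1) = κ) :
    IntegrableOn (fun φ => Real.cos ((θ - φ)/2) / Real.sin ((θ - φ)/2) *
        (if φ ∈ Icc a b then (1:ℝ) else -1)) (Ioc u v) ∧
    ∫ φ in Ioc u v, Real.cos ((θ - φ)/2) / Real.sin ((θ - φ)/2) *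
        (if φ ∈ Icc a b then (1:ℝ) else -1) = κ * (Fc θ v - Fc θ u) := by
  have hcont : ContinuousOn (fun φ => Real.cos ((θ - φ) / 2) / Real.sin ((θ - φ) / 2)) (Icc u v) := by
    apply ContinuousOn.div
    · exact (Real.continuous_cos.comp (by continuity)).continuousOn
    · exact (Real.continuous_sin.comp (by continuity)).continuousOn
    · exact hne
  have hint : IntegrableOn (fun φ => κ * (Real.cos ((θ - φ)/2) / Real.sin ((θ - φ)/2))) (Ioc u v) :=
    ((hcont.integrableOn_Icc).mono_set Ioc_subset_Icc_self).const_mul κ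
  have hv0 : ∀ᵐ φ : ℝ ∂volume, φ ≠ v := by
    rw [ae_iff, show {x : ℝ | ¬ x ≠ v} = {v} by ext x; simp]
    exact measure_singleton v
  have hae : (fun φ => Real.cos ((θ - φ)/2) / Real.sin ((θ - φ)/2) *
        (if φ ∈ Icc a b then (1:ℝ) else -1))
      =ᵐ[volume.restrict (Ioc u v)]
      (fun φ => κ * (Real.cos ((θ - φ)/2) / Real.sin ((θ - φ)/2))) := by
    rw [EventuallyEq, ae_restrict_iff' measurableSet_Ioc]
    filter_upwards [hv0] with φ hφv hφ
    have hmem : φ ∈ Ioo u v := ⟨hφ.1, lt_of_le_of_ne hφ.2 hφv⟩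
    rw [hκ φ hmem, mul_comm]
  constructor
  · exact hint.congr hae.symm
  · rw [integral_congr_ae hae, integral_const_mul, ← intervalIntegral.integral_of_le huv,
      ftc_cot θ u v huv hne]

lemma hne_piece {θ u v : ℝ} (hu : -(2*π) < θ - v) (hv : θ - u < 2*π) (hor : v < θ ∨ θ < u) :
    ∀ φ ∈ Icc u v, Real.sin ((θ - φ) / 2) ≠ 0 := by
  rintro φ ⟨hl, hr⟩
  apply sin_half_ne_zero
  · rcases hor with h | h
    · exact sub_ne_zero.2 (ne_of_gt (lt_of_le_of_lt hr h))
    · exact sub_ne_zero.2 (ne_of_lt (lt_of_lt_of_le h hl))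
  · rw [abs_lt]; constructor <;> linarith

lemma Fc_eps (θ ε : ℝ) : Fc θ (θ - ε) = Fc θ (θ + ε) := by
  unfold Fc
  rw [show (θ - (θ - ε)) / 2 = ε / 2 by ring, show (θ - (θ + ε)) / 2 = -(ε / 2) by ring,
    Real.sin_neg, Real.log_neg_eq_log]

lemma Fc_ends (θ : ℝ) : Fc θ 0 = Fc θ (2 * π) := by
  unfold Fc
  rw [show (θ - 2 * π) / 2 = θ / 2 - π by ring, Real.sin_sub_pi, Real.log_neg_eq_log,
    show (θ - 0) / 2 = θ / 2 by ring]

lemma Fc_goal (θ a b : ℝ) : 2 * (Fc θ b - Fc θ a) =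
    4 * (Real.log |Real.sin ((θ - a) / 2)| - Real.log |Real.sin ((θ - b) / 2)|) := by
  unfold Fc
  rw [Real.log_abs, Real.log_abs]
  ring

lemma key (a b θ : ℝ) (ha : 0 < a) (hab : a < b) (hb : b < 2*π)
    (hθ0 : 0 < θ) (hθ2 : θ < 2*π) (hθa : θ ≠ a) (hθb : θ ≠ b) (ε : ℝ)
    (hε0 : 0 < ε) (hεθ : ε < θ) (hε2 : ε < 2*π - θ) (hεa : ε < |θ - a|) (hεb : ε < |θ - b|) :
    ∫ φ in Ioc 0 (2*π), (if ε < |θ - φ| then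
        Real.cos ((θ - φ) / 2) / Real.sin ((θ - φ) / 2) * (if φ ∈ Icc a b then (1:ℝ) else -1) else 0)
      = 4 * (Real.log |Real.sin ((θ - a) / 2)| - Real.log |Real.sin ((θ - b) / 2)|) := by
  have hπ := Real.pi_pos
  set f : ℝ → ℝ := fun φ => Real.cos ((θ - φ) / 2) / Real.sin ((θ - φ) / 2) *
      (if φ ∈ Icc a b then (1:ℝ) else -1) with hf
  set s : Set ℝ := Iio (θ - ε) ∪ Ioi (θ + ε) with hs_def
  have hs : MeasurableSet s := (measurableSet_Iio).union measurableSet_Ioi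
  have hiff : ∀ φ : ℝ, (ε < |θ - φ|) ↔ φ ∈ s := by
    intro φ
    rw [lt_abs]
    simp only [hs_def, mem_union, mem_Iio, mem_Ioi]
    constructor
    · rintro (h | h)
      · left; linarith
      · right; linarith
    · rintro (h | h)
      · left; linarith
      · right; linarith
  have hind : ∀ φ : ℝ, (if ε < |θ - φ| then f φ else 0) = s.indicator f φ := by
    intro φ
    rw [Set.indicator_apply]
    exact if_congr (hiff φ) rfl rfl
  have hinter : s ∩ Ioc 0 (2*π) = Ioo 0 (θ - ε) ∪ Ioc (θ + ε) (2*π) := by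
    ext φ
    simp only [hs_def, mem_inter_iff, mem_union, mem_Iio, mem_Ioi, mem_Ioc, mem_Ioo]
    constructor
    · rintro ⟨h1 | h1, h2, h3⟩
      · exact Or.inl ⟨h2, h1⟩
      · exact Or.inr ⟨h1, h3⟩
    · rintro (⟨h1, h2⟩ | ⟨h1, h2⟩)
      · exact ⟨Or.inl h2, h1, by linarith⟩
      · exact ⟨Or.inr h1, by linarith, h2⟩
  have step1 : ∫ φ in Ioc 0 (2*π), (if ε < |θ - φ| then f φ else 0)
      = ∫ φ in Ioo 0 (θ - ε) ∪ Ioc (θ + ε) (2*π), f φ := by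
    rw [integral_congr_ae (ae_of_all _ hind), integral_indicator hs,
      Measure.restrict_restrict hs, hinter]
  rw [step1]
  have hFε := Fc_eps θ ε
  have hF0 := Fc_ends θ
  have hFg := Fc_goal θ a b
  -- trichotomy
  rcases lt_trichotomy θ a with hcase | hcase | hcase
  · -- θ < a
    have hεa' : ε < a - θ := by rwa [abs_of_neg (by linarith : θ - a < 0), neg_sub] at hεa
    have p1 := piece a b θ 0 (θ - ε) (by linarith) (-1)
      (hne_piece (by linarith) (by linarith) (Or.inl (by linarith)))
      (fun φ hφ => by rw [if_neg (fun hc => absurd hc.1 (not_le.2 (by linarith [hφ.2])))])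
    have p2 := piece a b θ (θ + ε) a (by linarith) (-1)
      (hne_piece (by linarith) (by linarith) (Or.inr (by linarith)))
      (fun φ hφ => by rw [if_neg (fun hc => absurd hc.1 (not_le.2 (by linarith [hφ.2])))])
    have p3 := piece a b θ a b (le_of_lt hab) 1
      (hne_piece (by linarith) (by linarith) (Or.inr (by linarith)))
      (fun φ hφ => by rw [if_pos ⟨le_of_lt hφ.1, le_of_lt hφ.2⟩])
    have p4 := piece a b θ b (2*π) (le_of_lt hb) (-1)
      (hne_piece (by linarith) (by linarith) (Or.inr (by linarith)))
      (fun φ hφ => by rw [if_neg (fun hc => absurd hc.2 (not_le.2 (by linarith [hφ.1])))])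
    have hu1 : Ioc a b ∪ Ioc b (2*π) = Ioc a (2*π) := Ioc_union_Ioc_eq_Ioc (le_of_lt hab) (le_of_lt hb)
    have hu2 : Ioc (θ + ε) a ∪ Ioc a (2*π) = Ioc (θ + ε) (2*π) :=
      Ioc_union_Ioc_eq_Ioc (by linarith) (by linarith)
    have hint_a2π : IntegrableOn f (Ioc a (2*π)) := hu1 ▸ p3.1.union p4.1
    have hint_right : IntegrableOn f (Ioc (θ + ε) (2*π)) := hu2 ▸ p2.1.union hint_a2π
    have hdisj : Disjoint (Ioo 0 (θ - ε)) (Ioc (θ + ε) (2*π)) := by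
      rw [Set.disjoint_left]; rintro x ⟨_, h1⟩ ⟨h2, _⟩; linarith
    rw [setIntegral_union hdisj measurableSet_Ioc (p1.1.mono_set Ioo_subset_Ioc_self) hint_right,
      ← integral_Ioc_eq_integral_Ioo, p1.2,
      ← hu2, setIntegral_union (Ioc_disjoint_Ioc_of_le le_rfl) measurableSet_Ioc p2.1 hint_a2π, p2.2,
      ← hu1, setIntegral_union (Ioc_disjoint_Ioc_of_le le_rfl) measurableSet_Ioc p3.1 p4.1, p3.2, p4.2]
    linarith
  · exact absurd hcase hθa
  · rcases lt_trichotomy θ b with hcase2 | hcase2 | hcase2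
    · -- a < θ < b
      have hεa' : ε < θ - a := by rwa [abs_of_pos (by linarith : 0 < θ - a)] at hεa
      have hεb' : ε < b - θ := by rwa [abs_of_neg (by linarith : θ - b < 0), neg_sub] at hεb
      have p1 := piece a b θ 0 a (le_of_lt ha) (-1)
        (hne_piece (by linarith) (by linarith) (Or.inl (by linarith)))
        (fun φ hφ => by rw [if_neg (fun hc => absurd hc.1 (not_le.2 (by linarith [hφ.2])))])
      have p2 := piece a b θ a (θ - ε) (by linarith) 1
        (hne_piece (by linarith) (by linarith) (Or.inl (by linarith)))
        (fun φ hφ => by rw [if_pos ⟨le_of_lt hφ.1, by linarith [hφ.2]⟩])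
      have p3 := piece a b θ (θ + ε) b (by linarith) 1
        (hne_piece (by linarith) (by linarith) (Or.inr (by linarith)))
        (fun φ hφ => by rw [if_pos ⟨by linarith [hφ.1], le_of_lt hφ.2⟩])
      have p4 := piece a b θ b (2*π) (le_of_lt hb) (-1)
        (hne_piece (by linarith) (by linarith) (Or.inr (by linarith)))
        (fun φ hφ => by rw [if_neg (fun hc => absurd hc.2 (not_le.2 (by linarith [hφ.1])))])
      have hu1 : Ioc 0 a ∪ Ioc a (θ - ε) = Ioc 0 (θ - ε) :=
        Ioc_union_Ioc_eq_Ioc (le_of_lt ha) (by linarith)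
      have hu2 : Ioc (θ + ε) b ∪ Ioc b (2*π) = Ioc (θ + ε) (2*π) :=
        Ioc_union_Ioc_eq_Ioc (by linarith) (le_of_lt hb)
      have hint_left : IntegrableOn f (Ioc 0 (θ - ε)) := hu1 ▸ p1.1.union p2.1
      have hint_right : IntegrableOn f (Ioc (θ + ε) (2*π)) := hu2 ▸ p3.1.union p4.1
      have hdisj : Disjoint (Ioo 0 (θ - ε)) (Ioc (θ + ε) (2*π)) := by
        rw [Set.disjoint_left]; rintro x ⟨_, h1⟩ ⟨h2, _⟩; linarith
      rw [setIntegral_union hdisj measurableSet_Ioc (hint_left.mono_set Ioo_subset_Ioc_self)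
          hint_right, ← integral_Ioc_eq_integral_Ioo,
        ← hu1, setIntegral_union (Ioc_disjoint_Ioc_of_le le_rfl) measurableSet_Ioc p1.1 p2.1, p1.2, p2.2,
        ← hu2, setIntegral_union (Ioc_disjoint_Ioc_of_le le_rfl) measurableSet_Ioc p3.1 p4.1, p3.2, p4.2]
      linarith
    · exact absurd hcase2 hθb
    · -- b < θ
      have hεb' : ε < θ - b := by rwa [abs_of_pos (by linarith : 0 < θ - b)] at hεb
      have p1 := piece a b θ 0 a (le_of_lt ha) (-1)
        (hne_piece (by linarith) (by linarith) (Or.inl (by linarith)))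
        (fun φ hφ => by rw [if_neg (fun hc => absurd hc.1 (not_le.2 (by linarith [hφ.2])))])
      have p2 := piece a b θ a b (le_of_lt hab) 1
        (hne_piece (by linarith) (by linarith) (Or.inl (by linarith)))
        (fun φ hφ => by rw [if_pos ⟨le_of_lt hφ.1, le_of_lt hφ.2⟩])
      have p3 := piece a b θ b (θ - ε) (by linarith) (-1)
        (hne_piece (by linarith) (by linarith) (Or.inl (by linarith)))
        (fun φ hφ => by rw [if_neg (fun hc => absurd hc.2 (not_le.2 (by linarith [hφ.1])))])
      have p4 := piece a b θ (θ + ε) (2*π) (by linarith) (-1)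
        (hne_piece (by linarith) (by linarith) (Or.inr (by linarith)))
        (fun φ hφ => by rw [if_neg (fun hc => absurd hc.2 (not_le.2 (by linarith [hφ.1])))])
      have hu1 : Ioc a b ∪ Ioc b (θ - ε) = Ioc a (θ - ε) :=
        Ioc_union_Ioc_eq_Ioc (le_of_lt hab) (by linarith)
      have hu2 : Ioc 0 a ∪ Ioc a (θ - ε) = Ioc 0 (θ - ε) :=
        Ioc_union_Ioc_eq_Ioc (le_of_lt ha) (by linarith)
      have hint_mid : IntegrableOn f (Ioc a (θ - ε)) := hu1 ▸ p2.1.union p3.1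
      have hint_left : IntegrableOn f (Ioc 0 (θ - ε)) := hu2 ▸ p1.1.union hint_mid
      have hdisj : Disjoint (Ioo 0 (θ - ε)) (Ioc (θ + ε) (2*π)) := by
        rw [Set.disjoint_left]; rintro x ⟨_, h1⟩ ⟨h2, _⟩; linarith
      rw [setIntegral_union hdisj measurableSet_Ioc (hint_left.mono_set Ioo_subset_Ioc_self) p4.1,
        ← integral_Ioc_eq_integral_Ioo, p4.2,
        ← hu2, setIntegral_union (Ioc_disjoint_Ioc_of_le le_rfl) measurableSet_Ioc p1.1 hint_mid, p1.2,
        ← hu1, setIntegral_union (Ioc_disjoint_Ioc_of_le le_rfl) measurableSet_Ioc p2.1 p3.1, p2.2, p3.2]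
      linarith

/-- For an interval `E = [a,b] ⊂ (0,2π)` and `ρ_E = 2χ_E - 1`, the conjugate function
`g` of `ρ_E` satisfies `exp((π/2) g(t)) = |sin((t-a)/2)|/|sin((t-b)/2)|` a.e., and
`exp((π/2) g)` is not integrable on any neighborhood of `b`. -/
theorem exp_conj_indicator_interval (a b : ℝ) (ha : 0 < a) (hab : a < b) (hb : b < 2 * π)
    (g : ℝ → ℝ) (hg : IsConjugateFn (fun t => if t ∈ Set.Icc a b then 1 else -1) g) :
    (∀ᵐ t ∂(volume.restrict (Set.Ioc 0 (2 * π))),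
        Real.exp (π / 2 * g t) = |Real.sin ((t - a) / 2)| / |Real.sin ((t - b) / 2)|) ∧
      ∀ ε > (0 : ℝ),
        ∫⁻ t in Set.Ioo (b - ε) (b + ε), ENNReal.ofReal (Real.exp (π / 2 * g t)) = ⊤ := by
  have hπ := Real.pi_pos
  have hπ0 : (π : ℝ) ≠ 0 := ne_of_gt hπ
  unfold IsConjugateFn at hg
  have hane : ∀ c : ℝ, ∀ᵐ θ : ℝ ∂(volume.restrict (Set.Ioc 0 (2*π))), θ ≠ c := by
    intro c
    refine ae_restrict_of_ae ?_
    rw [ae_iff, show {x : ℝ | ¬ x ≠ c} = {c} by ext x; simp]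
    exact measure_singleton c
  have hmem : ∀ᵐ θ : ℝ ∂(volume.restrict (Set.Ioc 0 (2*π))), θ ∈ Set.Ioc (0:ℝ) (2*π) :=
    ae_restrict_mem measurableSet_Ioc
  have hform : ∀ᵐ t ∂(volume.restrict (Set.Ioc 0 (2 * π))),
      Real.exp (π / 2 * g t) = |Real.sin ((t - a) / 2)| / |Real.sin ((t - b) / 2)| := by
    filter_upwards [hg, hmem, hane a, hane b, hane (2*π)] with θ htend hθmem hθa hθb hθ2'
    have hθ0 : 0 < θ := hθmem.1
    have hθ2 : θ < 2*π := lt_of_le_of_ne hθmem.2 hθ2'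
    set L : ℝ := 2 / π * (Real.log |Real.sin ((θ - a) / 2)| - Real.log |Real.sin ((θ - b) / 2)|)
      with hL
    have hδ : (0:ℝ) < min (min θ (2*π - θ)) (min |θ - a| |θ - b|) :=
      lt_min (lt_min hθ0 (by linarith))
        (lt_min (abs_pos.2 (sub_ne_zero.2 hθa)) (abs_pos.2 (sub_ne_zero.2 hθb)))
    have hev : ∀ᶠ ε in nhdsWithin (0:ℝ) (Set.Ioi 0),
        (1 / (2 * π)) * ∫ φ in Set.Ioc 0 (2 * π),
          (if ε < |θ - φ| then Real.cos ((θ - φ) / 2) / Real.sin ((θ - φ) / 2) *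
            (if φ ∈ Set.Icc a b then (1:ℝ) else -1) else 0) = L := by
      filter_upwards [Ioo_mem_nhdsGT_of_mem ⟨le_refl (0:ℝ), hδ⟩] with ε hε
      obtain ⟨hε0, hεδ⟩ := hε
      rw [key a b θ ha hab hb hθ0 hθ2 hθa hθb ε hε0
        (lt_of_lt_of_le hεδ ((min_le_left _ _).trans (min_le_left _ _)))
        (lt_of_lt_of_le hεδ ((min_le_left _ _).trans (min_le_right _ _)))
        (lt_of_lt_of_le hεδ ((min_le_right _ _).trans (min_le_left _ _)))
        (lt_of_lt_of_le hεδ ((min_le_right _ _).trans (min_le_right _ _))), hL]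
      field_simp
      ring
    have htend' : Filter.Tendsto
        (fun ε : ℝ => (1 / (2 * π)) * ∫ φ in Set.Ioc 0 (2 * π),
          (if ε < |θ - φ| then Real.cos ((θ - φ) / 2) / Real.sin ((θ - φ) / 2) *
            (if φ ∈ Set.Icc a b then (1:ℝ) else -1) else 0))
        (nhdsWithin 0 (Set.Ioi 0)) (nhds L) :=
      Filter.Tendsto.congr' (hev.mono fun x h => h.symm) tendsto_const_nhds
    have hgL : g θ = L := tendsto_nhds_unique htend htend'
    have hA : 0 < |Real.sin ((θ - a) / 2)| :=
      abs_pos.2 (sin_half_ne_zero (sub_ne_zero.2 hθa) (by rw [abs_lt]; constructor <;> linarith))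
    have hB : 0 < |Real.sin ((θ - b) / 2)| :=
      abs_pos.2 (sin_half_ne_zero (sub_ne_zero.2 hθb) (by rw [abs_lt]; constructor <;> linarith))
    have harg : π / 2 * g θ =
        Real.log |Real.sin ((θ - a) / 2)| - Real.log |Real.sin ((θ - b) / 2)| := by
      rw [hgL, hL]; field_simp
    rw [harg, Real.exp_sub, Real.exp_log hA, Real.exp_log hB]
  refine ⟨hform, fun ε hε => ?_⟩
  by_contra hfin
  set η : ℝ := min ε ((b - a) / 2) with hη
  have hη0 : 0 < η := lt_min hε (by linarith)
  have hηε : η ≤ ε := min_le_left _ _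
  have hηba : η ≤ (b - a) / 2 := min_le_right _ _
  have hcont : ContinuousOn (fun t : ℝ => |Real.sin ((t - a) / 2)|) (Icc (b - η) b) :=
    ((Real.continuous_sin.comp (by continuity)).abs).continuousOn
  obtain ⟨t0, ht0, hmin⟩ := isCompact_Icc.exists_isMinOn ⟨b, by constructor <;> linarith⟩ hcont
  set m : ℝ := |Real.sin ((t0 - a) / 2)| with hm_def
  have hm : 0 < m := by
    apply abs_pos.2
    apply sin_half_ne_zero
    · have := ht0.1; have := ht0.2
      exact ne_of_gt (by linarith)
    · have := ht0.1; have := ht0.2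
      rw [abs_lt]; constructor <;> linarith
  have hsub : Ioo (b - η) b ⊆ Set.Ioc 0 (2*π) := fun x hx =>
    ⟨by linarith [hx.1], by linarith [hx.2]⟩
  have hform' : ∀ᵐ t ∂(volume.restrict (Ioo (b - η) b)),
      Real.exp (π / 2 * g t) = |Real.sin ((t - a) / 2)| / |Real.sin ((t - b) / 2)| :=
    ae_mono (Measure.restrict_mono hsub le_rfl) hform
  have hbound : ∀ᵐ t ∂(volume.restrict (Ioo (b - η) b)),
      ENNReal.ofReal (2 * m * (b - t)⁻¹) ≤ ENNReal.ofReal (Real.exp (π / 2 * g t)) := by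
    filter_upwards [hform', ae_restrict_mem measurableSet_Ioo] with t ht htmem
    rw [ht]
    apply ENNReal.ofReal_le_ofReal
    have htb : t < b := htmem.2
    have htl : b - η < t := htmem.1
    have hden_pos : 0 < |Real.sin ((t - b) / 2)| := by
      apply abs_pos.2
      apply sin_half_ne_zero (ne_of_lt (by linarith))
      rw [abs_lt]; constructor <;> linarith
    have hden_le : |Real.sin ((t - b) / 2)| ≤ (b - t) / 2 := by
      calc |Real.sin ((t - b) / 2)| ≤ |(t - b) / 2| := Real.abs_sin_le_abs
        _ = (b - t) / 2 := by
            rw [show (t - b) / 2 = -((b - t) / 2) by ring, abs_neg, abs_of_nonneg (by linarith)]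
    have hnum : m ≤ |Real.sin ((t - a) / 2)| := hmin ⟨le_of_lt htl, le_of_lt htb⟩
    calc 2 * m * (b - t)⁻¹ = m / ((b - t) / 2) := by
          rw [div_div_eq_mul_div, div_eq_mul_inv]; ring
      _ ≤ |Real.sin ((t - a) / 2)| / |Real.sin ((t - b) / 2)| :=
          div_le_div₀ (abs_nonneg _) hnum hden_pos hden_le
  have hle := lintegral_mono_ae hbound
  have h2 : ∫⁻ t in Ioo (b - η) b, ENNReal.ofReal (Real.exp (π / 2 * g t))
      ≤ ∫⁻ t in Set.Ioo (b - ε) (b + ε), ENNReal.ofReal (Real.exp (π / 2 * g t)) :=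
    lintegral_mono_set (fun x hx => ⟨by linarith [hx.1], by linarith [hx.2]⟩)
  have hfin' : ∫⁻ t in Ioo (b - η) b, ENNReal.ofReal (2 * m * (b - t)⁻¹) < ⊤ :=
    lt_of_le_of_lt (hle.trans h2) (Ne.lt_top hfin)
  have hmeas : Measurable (fun t : ℝ => 2 * m * (b - t)⁻¹) :=
    ((measurable_const.sub measurable_id).inv).const_mul _
  have hnn : 0 ≤ᵐ[volume.restrict (Ioo (b - η) b)] (fun t : ℝ => 2 * m * (b - t)⁻¹) := by
    filter_upwards [ae_restrict_mem measurableSet_Ioo] with t ht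
    have h1 : (0:ℝ) < b - t := by linarith [ht.2]
    positivity
  have hint : IntegrableOn (fun t : ℝ => 2 * m * (b - t)⁻¹) (Ioo (b - η) b) := by
    refine ⟨hmeas.aestronglyMeasurable, ?_⟩
    rw [hasFiniteIntegral_iff_ofReal hnn]
    exact hfin'
  have h2m : (2 * m : ℝ) ≠ 0 := by positivity
  have hint2 : IntegrableOn (fun t : ℝ => (t - b)⁻¹) (Ioo (b - η) b) := by
    have h3 := (hint.const_mul ((2 * m)⁻¹)).neg
    refine h3.congr (ae_of_all _ fun t => ?_)
    show -((2 * m)⁻¹ * (2 * m * (b - t)⁻¹)) = (t - b)⁻¹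
    rw [inv_mul_cancel_left₀ h2m, ← inv_neg, neg_sub]
  have hii : IntervalIntegrable (fun t : ℝ => (t - b)⁻¹) volume (b - η) b := by
    rw [intervalIntegrable_iff_integrableOn_Ioo_of_le (by linarith)]
    exact hint2
  rw [intervalIntegrable_sub_inv_iff] at hii
  rcases hii with h | h
  · linarith
  · exact h (by rw [uIcc_of_le (by linarith)]; exact ⟨by linarith, le_refl b⟩)
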